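/- arXiv:dg-ga/9702002 — 3 statements merged into one kernel-verified Lean document; each statement's English description precedes it below -/
import Mathlib

section
/- Let q ∈ ℝ, d ∈ ℤ, J a finite index set, and for each j ∈ J let a_j ∈ ℝ, k_j ∈ ℝ, and let σ_j be an even integer. Set ε_j = +1 if σ_j ≡ 2 (mod 4) and ε_j = −1 if σ_j ≡ 0 (mod 4). In ℂ[[t]] define G = exp(q t²/2) · Σ_{j∈J} a_j exp(k_j t) and H = exp(q t²/2) · Σ_{j∈J} ε_j a_j exp(k_j t), and assume that both G and H have vanishing coefficients in every degree n with n ≢ d (mod 2). Then [part of G in degrees ≡ d (mod 4)] + [part of H in degrees ≡ d+2 (mod 4)] = exp(q t²/2) · Σ_{j : σ_j ≡ 2 (mod 4)} a_j exp(k_j t) + i^{−d} exp(−q t²/2) · Σ_{j : σ_j ≡ 0 (mod 4)} a_j exp(i k_j t). -/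
/-- The formal exponential power series `exp(c t) ∈ ℂ[[t]]`. -/
noncomputable def pexp (c : ℂ) : PowerSeries ℂ :=
  PowerSeries.mk fun n => c ^ n / n.factorial

/-- The formal Gaussian power series `exp(q t²/2) ∈ ℂ[[t]]`. -/
noncomputable def pgauss (q : ℂ) : PowerSeries ℂ :=
  PowerSeries.mk fun n =>
    if Even n then (q / 2) ^ (n / 2) / (n / 2).factorial else 0

/-- The part of a formal power series in degrees `≡ d (mod 4)`. -/
noncomputable def part4 (d : ℤ) (F : PowerSeries ℂ) : PowerSeries ℂ :=
  PowerSeries.mk fun n =>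
    if (n : ℤ) % 4 = d % 4 then PowerSeries.coeff n F else 0

lemma rescale_pexp (c x : ℂ) :
    PowerSeries.rescale c (pexp x) = pexp (c * x) := by
  ext n
  simp [pexp, PowerSeries.coeff_rescale, mul_pow, mul_div_assoc]

lemma rescale_C' (c x : ℂ) :
    PowerSeries.rescale c (PowerSeries.C x) = PowerSeries.C x := by
  ext n
  simp only [PowerSeries.coeff_rescale, PowerSeries.coeff_C]
  split <;> simp_all

lemma rescale_pgauss (q : ℂ) :
    PowerSeries.rescale Complex.I (pgauss q) = pgauss (-q) := by
  ext n
  simp only [pgauss, PowerSeries.coeff_rescale, PowerSeries.coeff_mk]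
  by_cases hn : Even n
  · obtain ⟨m, rfl⟩ := hn
    have h2 : (m + m) / 2 = m := by omega
    have hI : Complex.I ^ (m + m) = (-1 : ℂ) ^ m := by
      rw [← two_mul, pow_mul, Complex.I_sq]
    have hq : ((-q) / 2) ^ m = (-1 : ℂ) ^ m * (q / 2) ^ m := by
      rw [show (-q) / 2 = (-1 : ℂ) * (q / 2) by ring, mul_pow]
    rw [if_pos ⟨m, rfl⟩, if_pos ⟨m, rfl⟩, h2, hI, hq]
    ring
  · simp [hn]

lemma I_zpow_of_mod_zero (m : ℤ) (hm : m % 4 = 0) : Complex.I ^ m = 1 := by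
  obtain ⟨c, rfl⟩ : ∃ c, m = 4 * c := ⟨m / 4, by omega⟩
  rw [zpow_mul, show ((4:ℤ)) = ((4:ℕ):ℤ) from rfl, zpow_natCast, Complex.I_pow_four, one_zpow]

lemma I_zpow_of_mod_two (m : ℤ) (hm : m % 4 = 2) : Complex.I ^ m = -1 := by
  obtain ⟨c, rfl⟩ : ∃ c, m = 4 * c + 2 := ⟨m / 4, by omega⟩
  rw [zpow_add₀ Complex.I_ne_zero, zpow_mul, show ((4:ℤ)) = ((4:ℕ):ℤ) from rfl,
    zpow_natCast, Complex.I_pow_four, one_zpow, one_mul,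
    show ((2:ℤ)) = ((2:ℕ):ℤ) from rfl, zpow_natCast, Complex.I_sq]

theorem part4_G_add_part4_H (q : ℝ) (d : ℤ) (J : Type*) [Fintype J]
    (a k : J → ℝ) (σ : J → ℤ) (hσ : ∀ j, Even (σ j))
    (ε : J → ℂ) (hε : ∀ j, ε j = if σ j % 4 = 2 then 1 else -1)
    (G H : PowerSeries ℂ)
    (hG : G = pgauss (q : ℂ) * ∑ j, PowerSeries.C (a j : ℂ) * pexp ((k j : ℂ)))
    (hH : H = pgauss (q : ℂ) * ∑ j, PowerSeries.C (ε j * (a j : ℂ)) * pexp ((k j : ℂ)))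
    (hGpar : ∀ n : ℕ, ¬ ((n : ℤ) % 2 = d % 2) → PowerSeries.coeff n G = 0)
    (hHpar : ∀ n : ℕ, ¬ ((n : ℤ) % 2 = d % 2) → PowerSeries.coeff n H = 0) :
    part4 d G + part4 (d + 2) H =
      pgauss (q : ℂ) * ∑ j ∈ Finset.univ.filter (fun j => σ j % 4 = 2),
          PowerSeries.C (a j : ℂ) * pexp ((k j : ℂ)) +
      (Complex.I ^ (-d)) •
        (pgauss (-(q : ℂ)) * ∑ j ∈ Finset.univ.filter (fun j => σ j % 4 = 0),
          PowerSeries.C (a j : ℂ) * pexp (Complex.I * (k j : ℂ))) := by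
  set S2 : PowerSeries ℂ := ∑ j ∈ Finset.univ.filter (fun j => σ j % 4 = 2),
      PowerSeries.C (a j : ℂ) * pexp ((k j : ℂ)) with hS2
  set S0 : PowerSeries ℂ := ∑ j ∈ Finset.univ.filter (fun j => σ j % 4 = 0),
      PowerSeries.C (a j : ℂ) * pexp ((k j : ℂ)) with hS0
  -- the rescaled piece
  have hB : pgauss (-(q:ℂ)) * ∑ j ∈ Finset.univ.filter (fun j => σ j % 4 = 0),
        PowerSeries.C (a j : ℂ) * pexp (Complex.I * (k j : ℂ)) =
      PowerSeries.rescale Complex.I (pgauss (q:ℂ) * S0) := by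
    rw [map_mul, rescale_pgauss, hS0, map_sum]
    congr 1
    refine Finset.sum_congr rfl fun j _ => ?_
    rw [map_mul, rescale_C', rescale_pexp]
  -- sum identities
  have hsum2 : (∑ j, PowerSeries.C (a j : ℂ) * pexp ((k j : ℂ))) +
      (∑ j, PowerSeries.C (ε j * (a j : ℂ)) * pexp ((k j : ℂ))) = S2 + S2 := by
    rw [hS2, ← Finset.sum_add_distrib, ← Finset.sum_add_distrib, Finset.sum_filter]
    refine Finset.sum_congr rfl fun j _ => ?_
    by_cases hj : σ j % 4 = 2
    · rw [if_pos hj, hε j, if_pos hj, one_mul]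
    · rw [if_neg hj, hε j, if_neg hj, neg_one_mul, map_neg, neg_mul, add_neg_cancel]
  have hsum0 : (∑ j, PowerSeries.C (a j : ℂ) * pexp ((k j : ℂ))) -
      (∑ j, PowerSeries.C (ε j * (a j : ℂ)) * pexp ((k j : ℂ))) = S0 + S0 := by
    rw [hS0, ← Finset.sum_sub_distrib, ← Finset.sum_add_distrib, Finset.sum_filter]
    refine Finset.sum_congr rfl fun j _ => ?_
    by_cases hj : σ j % 4 = 0
    · have hj2 : ¬ σ j % 4 = 2 := by omega
      rw [if_pos hj, hε j, if_neg hj2, neg_one_mul, map_neg, neg_mul, sub_neg_eq_add]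
    · have hj2 : σ j % 4 = 2 := by
        have := (Int.even_iff).mp (hσ j); omega
      rw [if_neg hj, hε j, if_pos hj2, one_mul, sub_self]
  have hGH : G + H = pgauss (q:ℂ) * S2 + pgauss (q:ℂ) * S2 := by
    rw [hG, hH, ← mul_add, hsum2, mul_add]
  have hGmH : G - H = pgauss (q:ℂ) * S0 + pgauss (q:ℂ) * S0 := by
    rw [hG, hH, ← mul_sub, hsum0, mul_add]
  ext n
  have e2 : (PowerSeries.coeff n) G + (PowerSeries.coeff n) H =
      2 * (PowerSeries.coeff n) (pgauss (q:ℂ) * S2) := by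
    rw [← map_add, hGH, map_add]; ring
  have e0 : (PowerSeries.coeff n) G - (PowerSeries.coeff n) H =
      2 * (PowerSeries.coeff n) (pgauss (q:ℂ) * S0) := by
    rw [← map_sub, hGmH, map_add]; ring
  rw [map_add, map_add, hB, map_smul, PowerSeries.coeff_rescale, smul_eq_mul]
  simp only [part4, PowerSeries.coeff_mk]
  have hz : Complex.I ^ (-d) * (Complex.I ^ (n : ℕ) * (PowerSeries.coeff n) (pgauss (q:ℂ) * S0)) =
      Complex.I ^ ((n : ℤ) - d) * (PowerSeries.coeff n) (pgauss (q:ℂ) * S0) := by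
    rw [← zpow_natCast Complex.I n, ← mul_assoc, ← zpow_add₀ Complex.I_ne_zero,
      show -d + (n:ℤ) = (n:ℤ) - d by ring]
  rw [hz]
  by_cases hpar : (n : ℤ) % 2 = d % 2
  · have h4 : ((n:ℤ) - d) % 4 = 0 ∨ ((n:ℤ) - d) % 4 = 2 := by omega
    rcases h4 with h4 | h4
    · have c1 : (n:ℤ) % 4 = d % 4 := by omega
      have c2 : ¬ ((n:ℤ) % 4 = (d + 2) % 4) := by omega
      rw [if_pos c1, if_neg c2, I_zpow_of_mod_zero _ h4, one_mul]
      linear_combination e2 / 2 + e0 / 2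
    · have c1 : ¬ ((n:ℤ) % 4 = d % 4) := by omega
      have c2 : (n:ℤ) % 4 = (d + 2) % 4 := by omega
      rw [if_neg c1, if_pos c2, I_zpow_of_mod_two _ h4, neg_one_mul]
      linear_combination e2 / 2 - e0 / 2
  · have hg := hGpar n hpar
    have hh := hHpar n hpar
    have c1 : ¬ ((n:ℤ) % 4 = d % 4) := by omega
    have c2 : ¬ ((n:ℤ) % 4 = (d + 2) % 4) := by omega
    rw [if_neg c1, if_neg c2]
    rw [hg, hh] at e2 e0
    linear_combination e2 / 2 + Complex.I ^ ((n:ℤ) - d) * e0 / 2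
end

section
/- Let q ∈ ℝ, d ∈ ℤ, J a finite index set, and for each j ∈ J let a_j ∈ ℝ, k_j ∈ ℝ, and let σ_j be an even integer. Set ε_j = +1 if σ_j ≡ 2 (mod 4) and ε_j = −1 if σ_j ≡ 0 (mod 4). In ℂ[[t]] define G = exp(q t²/2) · Σ_{j∈J} a_j exp(k_j t) and H = exp(q t²/2) · Σ_{j∈J} ε_j a_j exp(k_j t), and assume that both G and H have vanishing coefficients in every degree n with n ≢ d (mod 2). Then 2·[part of G in degrees ≡ d+2 (mod 4)] + 2·[part of H in degrees ≡ d (mod 4)] = 2 exp(q t²/2) · Σ_{j : σ_j ≡ 2 (mod 4)} a_j exp(k_j t) − 2 i^{−d} exp(−q t²/2) · Σ_{j : σ_j ≡ 0 (mod 4)} a_j exp(i k_j t). -/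
/-- Replacing `q ↦ -q` and `c ↦ i c` multiplies the `n`-th coefficient of
`exp(q t²/2) exp(c t)` by `i^n`. -/
lemma coeff_key (q c : ℂ) (n : ℕ) :
    PowerSeries.coeff n (pgauss (-q) * pexp (Complex.I * c)) =
      Complex.I ^ n * PowerSeries.coeff n (pgauss q * pexp c) := by
  rw [PowerSeries.coeff_mul, PowerSeries.coeff_mul, Finset.mul_sum]
  refine Finset.sum_congr rfl ?_
  intro p hp
  have hpn : p.1 + p.2 = n := Finset.HasAntidiagonal.mem_antidiagonal.mp hp
  simp only [pgauss, pexp, PowerSeries.coeff_mk]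
  by_cases h : Even p.1
  · obtain ⟨m, hm⟩ := h
    have h1 : Even p.1 := ⟨m, hm⟩
    simp only [h1, if_true]
    have hdiv : p.1 / 2 = m := by omega
    rw [hdiv, ← hpn, pow_add, hm, mul_pow]
    have hIm : Complex.I ^ (m + m) = (-1 : ℂ) ^ m := by
      rw [← two_mul, pow_mul, Complex.I_sq]
    have hneg : (-q / 2 : ℂ) ^ m = (-1 : ℂ) ^ m * (q / 2) ^ m := by
      rw [neg_div, neg_pow]
    rw [hIm, hneg]
    ring
  · simp [h]

/-- Coefficient of a Gaussian times a linear combination of exponentials. -/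
lemma coeff_gauss_sum {J : Type*} (c : ℂ) (s : Finset J) (b : J → ℂ) (w : J → ℂ) (n : ℕ) :
    PowerSeries.coeff n (pgauss c * ∑ j ∈ s, PowerSeries.C (b j) * pexp (w j)) =
      ∑ j ∈ s, b j * PowerSeries.coeff n (pgauss c * pexp (w j)) := by
  rw [Finset.mul_sum, map_sum]
  refine Finset.sum_congr rfl ?_
  intro j _
  rw [show pgauss c * (PowerSeries.C (b j) * pexp (w j)) =
      PowerSeries.C (b j) * (pgauss c * pexp (w j)) by ring, PowerSeries.coeff_C_mul]

theorem two_part4_G_add_two_part4_H (q : ℝ) (d : ℤ) (J : Type*) [Fintype J]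
    (a k : J → ℝ) (σ : J → ℤ) (hσ : ∀ j, Even (σ j))
    (ε : J → ℂ) (hε : ∀ j, ε j = if σ j % 4 = 2 then 1 else -1)
    (G H : PowerSeries ℂ)
    (hG : G = pgauss (q : ℂ) * ∑ j, PowerSeries.C (a j : ℂ) * pexp ((k j : ℂ)))
    (hH : H = pgauss (q : ℂ) * ∑ j, PowerSeries.C (ε j * (a j : ℂ)) * pexp ((k j : ℂ)))
    (hGpar : ∀ n : ℕ, ¬ ((n : ℤ) % 2 = d % 2) → PowerSeries.coeff n G = 0)
    (hHpar : ∀ n : ℕ, ¬ ((n : ℤ) % 2 = d % 2) → PowerSeries.coeff n H = 0) :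
    (2 : ℂ) • part4 (d + 2) G + (2 : ℂ) • part4 d H =
      (2 : ℂ) • (pgauss (q : ℂ) * ∑ j ∈ Finset.univ.filter (fun j => σ j % 4 = 2),
          PowerSeries.C (a j : ℂ) * pexp ((k j : ℂ))) -
      (2 : ℂ) • ((Complex.I ^ (-d)) •
        (pgauss (-(q : ℂ)) * ∑ j ∈ Finset.univ.filter (fun j => σ j % 4 = 0),
          PowerSeries.C (a j : ℂ) * pexp (Complex.I * (k j : ℂ)))) := by
  ext n
  simp only [map_add, map_sub, map_smul, smul_eq_mul]
  set u : J → ℂ := fun j => PowerSeries.coeff n (pgauss (q : ℂ) * pexp ((k j : ℂ))) with hu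
  have hA : PowerSeries.coeff n G = ∑ j, (a j : ℂ) * u j := by
    rw [hG, coeff_gauss_sum]
  have hB : PowerSeries.coeff n H = ∑ j, (ε j * (a j : ℂ)) * u j := by
    rw [hH, coeff_gauss_sum]
  set A := ∑ j, (a j : ℂ) * u j with hAdef
  set B := ∑ j, (ε j * (a j : ℂ)) * u j with hBdef
  have h24 : ∀ j, σ j % 4 = 0 ∨ σ j % 4 = 2 := by
    intro j; obtain ⟨m, hm⟩ := hσ j; omega
  have hS2 : PowerSeries.coeff n (pgauss (q : ℂ) *
      ∑ j ∈ Finset.univ.filter (fun j => σ j % 4 = 2),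
        PowerSeries.C (a j : ℂ) * pexp ((k j : ℂ))) * 2 = A + B := by
    rw [coeff_gauss_sum, Finset.sum_mul, Finset.sum_filter, hAdef, hBdef, ← Finset.sum_add_distrib]
    refine Finset.sum_congr rfl ?_
    intro j _
    by_cases hj : σ j % 4 = 2
    · simp only [hε j, hj, reduceIte]; ring
    · simp only [hε j, hj, reduceIte]; ring
  have hS0 : PowerSeries.coeff n (pgauss (-(q : ℂ)) *
      ∑ j ∈ Finset.univ.filter (fun j => σ j % 4 = 0),
        PowerSeries.C (a j : ℂ) * pexp (Complex.I * (k j : ℂ))) * 2 =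
      Complex.I ^ n * (A - B) := by
    rw [coeff_gauss_sum]
    have hterm : ∀ j, (a j : ℂ) *
        PowerSeries.coeff n (pgauss (-(q : ℂ)) * pexp (Complex.I * (k j : ℂ)))
          = Complex.I ^ n * ((a j : ℂ) * u j) := by
      intro j
      rw [coeff_key]
      ring
    rw [Finset.sum_congr rfl fun j _ => hterm j, ← Finset.mul_sum, mul_assoc, Finset.sum_mul,
      Finset.sum_filter, hAdef, hBdef, ← Finset.sum_sub_distrib]
    congr 1
    refine Finset.sum_congr rfl ?_
    intro j _
    by_cases hj : σ j % 4 = 0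
    · have hj2 : ¬ (σ j % 4 = 2) := by omega
      rw [hε j, if_neg hj2, if_pos hj]; ring
    · have hj2 : σ j % 4 = 2 := by have := h24 j; omega
      rw [hε j, if_pos hj2, if_neg hj]; ring
  have hp1 : PowerSeries.coeff n (part4 (d + 2) G) =
      if (n : ℤ) % 4 = (d + 2) % 4 then A else 0 := by
    rw [part4, PowerSeries.coeff_mk, hA]
  have hp2 : PowerSeries.coeff n (part4 d H) =
      if (n : ℤ) % 4 = d % 4 then B else 0 := by
    rw [part4, PowerSeries.coeff_mk, hB]
  rw [hp1, hp2]
  have hIne : (Complex.I : ℂ) ≠ 0 := Complex.I_ne_zero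
  have hI4 : (Complex.I : ℂ) ^ (4 : ℤ) = 1 := by
    rw [show (4 : ℤ) = ((4 : ℕ) : ℤ) by norm_num, zpow_natCast, Complex.I_pow_four]
  have hIpow : Complex.I ^ (-d) * Complex.I ^ n = Complex.I ^ (((n : ℤ) - d) % 4) := by
    have h1 : Complex.I ^ (-d) * Complex.I ^ n = Complex.I ^ ((n : ℤ) - d) := by
      rw [← zpow_natCast (Complex.I) n, ← zpow_add₀ hIne]
      congr 1
      ring
    have h2 : (n : ℤ) - d = 4 * (((n : ℤ) - d) / 4) + ((n : ℤ) - d) % 4 := by omega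
    rw [h1]
    conv_lhs => rw [h2]
    rw [zpow_add₀ hIne, zpow_mul, hI4, one_zpow, one_mul]
  have hr : ((n : ℤ) - d) % 4 = 0 ∨ ((n : ℤ) - d) % 4 = 1 ∨
      ((n : ℤ) - d) % 4 = 2 ∨ ((n : ℤ) - d) % 4 = 3 := by omega
  rcases hr with hr | hr | hr | hr
  · -- n ≡ d (mod 4)
    have c1 : ¬ ((n : ℤ) % 4 = (d + 2) % 4) := by omega
    have c2 : (n : ℤ) % 4 = d % 4 := by omega
    rw [if_neg c1, if_pos c2]
    have hIval : Complex.I ^ (-d) * Complex.I ^ n = 1 := by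
      rw [hIpow, hr, zpow_zero]
    linear_combination -hS2 + Complex.I ^ (-d) * hS0 + (A - B) * hIval
  · -- n ≢ d (mod 2)
    have c1 : ¬ ((n : ℤ) % 4 = (d + 2) % 4) := by omega
    have c2 : ¬ ((n : ℤ) % 4 = d % 4) := by omega
    have hpar : ¬ ((n : ℤ) % 2 = d % 2) := by omega
    have hA0 : A = 0 := by rw [← hA]; exact hGpar n hpar
    have hB0 : B = 0 := by rw [← hB]; exact hHpar n hpar
    rw [if_neg c1, if_neg c2]
    linear_combination -hS2 + Complex.I ^ (-d) * hS0 +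
      (-1 + Complex.I ^ (-d) * Complex.I ^ n) * hA0 +
      (-1 - Complex.I ^ (-d) * Complex.I ^ n) * hB0
  · -- n ≡ d + 2 (mod 4)
    have c1 : (n : ℤ) % 4 = (d + 2) % 4 := by omega
    have c2 : ¬ ((n : ℤ) % 4 = d % 4) := by omega
    rw [if_pos c1, if_neg c2]
    have hIval : Complex.I ^ (-d) * Complex.I ^ n = -1 := by
      rw [hIpow, hr, show (2 : ℤ) = ((2 : ℕ) : ℤ) by norm_num, zpow_natCast, Complex.I_sq]
    linear_combination -hS2 + Complex.I ^ (-d) * hS0 + (A - B) * hIval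
  · -- n ≢ d (mod 2)
    have c1 : ¬ ((n : ℤ) % 4 = (d + 2) % 4) := by omega
    have c2 : ¬ ((n : ℤ) % 4 = d % 4) := by omega
    have hpar : ¬ ((n : ℤ) % 2 = d % 2) := by omega
    have hA0 : A = 0 := by rw [← hA]; exact hGpar n hpar
    have hB0 : B = 0 := by rw [← hB]; exact hHpar n hpar
    rw [if_neg c1, if_neg c2]
    linear_combination -hS2 + Complex.I ^ (-d) * hS0 +
      (-1 + Complex.I ^ (-d) * Complex.I ^ n) * hA0 +
      (-1 - Complex.I ^ (-d) * Complex.I ^ n) * hB0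
end

section
/- Let q be a nonzero real number, let k_1, …, k_n be pairwise distinct real numbers, let μ_1, …, μ_m be pairwise distinct complex numbers, and let a_1, …, a_n, d_1, …, d_m ∈ ℂ. If exp(q t²/2) · Σ_{j=1}^n a_j exp(k_j t) + exp(−q t²/2) · Σ_{l=1}^m d_l exp(μ_l t) = 0 in the formal power series ring ℂ[[t]], then a_j = 0 for all j and d_l = 0 for all l. -/
namespace GaussExpAux

open PowerSeries

lemma coeff_pexp (c : ℂ) (n : ℕ) :
    PowerSeries.coeff n (pexp c) = c ^ n / n.factorial := by
  simp [pexp]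

lemma constantCoeff_pexp (c : ℂ) : PowerSeries.constantCoeff (pexp c) = 1 := by
  simp [pexp, ← PowerSeries.coeff_zero_eq_constantCoeff]

lemma pexp_ne_zero (c : ℂ) : pexp c ≠ 0 := by
  intro h
  have h2 := constantCoeff_pexp c
  rw [h] at h2
  simp at h2

lemma constantCoeff_pgauss (q : ℂ) : PowerSeries.constantCoeff (pgauss q) = 1 := by
  simp [pgauss, ← PowerSeries.coeff_zero_eq_constantCoeff]

lemma pgauss_ne_zero (q : ℂ) : pgauss q ≠ 0 := by
  intro h
  have h2 := constantCoeff_pgauss q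
  rw [h] at h2
  simp at h2

lemma derivative_pexp (c : ℂ) :
    d⁄dX ℂ (pexp c) = PowerSeries.C c * pexp c := by
  ext n
  rw [PowerSeries.coeff_derivative, PowerSeries.coeff_C_mul, coeff_pexp, coeff_pexp,
    Nat.factorial_succ, pow_succ]
  have h1 : ((n : ℂ) + 1) ≠ 0 := Nat.cast_add_one_ne_zero n
  have h2 : ((n.factorial : ℕ) : ℂ) ≠ 0 := by exact_mod_cast n.factorial_ne_zero
  push_cast
  field_simp

lemma derivative_pgauss (q : ℂ) :
    d⁄dX ℂ (pgauss q) = PowerSeries.C q * (PowerSeries.X * pgauss q) := by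
  ext n
  rw [PowerSeries.coeff_derivative, PowerSeries.coeff_C_mul]
  rcases Nat.even_or_odd n with he | ho
  · obtain ⟨s, rfl⟩ := he
    have hodd : ¬ Even (s + s + 1) := by
      simp [Nat.even_add_one, Nat.even_add]
    rw [show PowerSeries.coeff (s + s + 1) (pgauss q) = 0 by simp [pgauss, hodd]]
    rcases Nat.eq_zero_or_pos (s + s) with h0 | hp
    · rw [h0]
      simp [PowerSeries.coeff_zero_eq_constantCoeff]
    · obtain ⟨r, hr⟩ : ∃ r, s + s = r + 1 := ⟨s + s - 1, by omega⟩
      rw [hr, PowerSeries.coeff_succ_X_mul]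
      have hro : ¬ Even r := by
        have hev : Even (s + s) := ⟨s, rfl⟩
        rw [hr] at hev
        simpa [Nat.even_add_one] using hev
      simp [pgauss, hro]
  · obtain ⟨s, rfl⟩ := ho
    have h1 : Even (2 * s + 1 + 1) := ⟨s + 1, by ring⟩
    have h2 : Even (2 * s) := ⟨s, by ring⟩
    rw [show (2 * s + 1 : ℕ) = (2 * s) + 1 from rfl, PowerSeries.coeff_succ_X_mul]
    rw [show PowerSeries.coeff (2 * s + 1 + 1) (pgauss q)
        = (q / 2) ^ (s + 1) / (s + 1).factorial by
      simp only [pgauss, PowerSeries.coeff_mk, h1, if_true,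
        show (2 * s + 1 + 1) / 2 = s + 1 from by omega]]
    rw [show PowerSeries.coeff (2 * s) (pgauss q)
        = (q / 2) ^ s / s.factorial by
      simp only [pgauss, PowerSeries.coeff_mk, h2, if_true,
        show (2 * s) / 2 = s from by omega]]
    have h3 : ((s.factorial : ℕ) : ℂ) ≠ 0 := by exact_mod_cast s.factorial_ne_zero
    have h5 : ((s : ℂ) + 1) ≠ 0 := Nat.cast_add_one_ne_zero s
    rw [Nat.factorial_succ, pow_succ]
    push_cast
    field_simp
    ring

lemma pgauss_mul_pgauss_neg (q : ℂ) : pgauss q * pgauss (-q) = 1 := by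
  apply PowerSeries.derivative.ext
  · have hCneg : PowerSeries.C (-q) = -PowerSeries.C q := map_neg _ _
    rw [Derivation.leibniz, derivative_pgauss, derivative_pgauss,
      Derivation.map_one_eq_zero, hCneg]
    simp only [smul_eq_mul]
    ring
  · rw [map_mul, constantCoeff_pgauss, constantCoeff_pgauss, map_one, mul_one]

/-- The first-order operator `F ↦ F' - c F`. -/
noncomputable def Dop (c : ℂ) (F : PowerSeries ℂ) : PowerSeries ℂ :=
  d⁄dX ℂ F - PowerSeries.C c * F

lemma Dop_zero (c : ℂ) : Dop c 0 = 0 := by simp [Dop]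

lemma Dop_add (c : ℂ) (F G : PowerSeries ℂ) : Dop c (F + G) = Dop c F + Dop c G := by
  simp only [Dop, map_add, mul_add]
  ring

lemma Dop_sum {α : Type*} (c : ℂ) (s : Finset α) (f : α → PowerSeries ℂ) :
    Dop c (∑ x ∈ s, f x) = ∑ x ∈ s, Dop c (f x) := by
  simp [Dop, map_sum, Finset.mul_sum, Finset.sum_sub_distrib]

lemma Dop_C_mul_pexp (c a e : ℂ) :
    Dop c (PowerSeries.C a * pexp e) = PowerSeries.C (a * (e - c)) * pexp e := by
  rw [Dop, Derivation.leibniz, derivative_pexp, smul_eq_mul, smul_eq_mul,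
    PowerSeries.derivative_C]
  rw [show (a * (e - c)) = a * e - c * a by ring, map_sub, map_mul, map_mul]
  ring

lemma Dop_poly_mul_pexp (c e : ℂ) (p : Polynomial ℂ) :
    Dop c ((p : PowerSeries ℂ) * pexp e) =
      ((Polynomial.derivative p + Polynomial.C (e - c) * p : Polynomial ℂ) : PowerSeries ℂ)
        * pexp e := by
  rw [Dop, Derivation.leibniz, derivative_pexp, PowerSeries.derivative_coe, smul_eq_mul,
    smul_eq_mul, Polynomial.coe_add, Polynomial.coe_mul, Polynomial.coe_C, map_sub]
  ring

lemma Dop_gauss_mul (c q : ℂ) (F : PowerSeries ℂ) :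
    Dop c (pgauss (-q) ^ 2 * F) =
      pgauss (-q) ^ 2 * (Dop c F - PowerSeries.C (2 * q) * (PowerSeries.X * F)) := by
  have hsq : pgauss (-q) ^ 2 * F = pgauss (-q) * (pgauss (-q) * F) := by ring
  have hCneg : PowerSeries.C (-q) = -PowerSeries.C q := map_neg _ _
  have hC2 : PowerSeries.C (2 * q) = PowerSeries.C q + PowerSeries.C q := by
    rw [two_mul, map_add]
  rw [Dop, hsq, Derivation.leibniz, Derivation.leibniz, derivative_pgauss, hCneg, Dop, hC2]
  simp only [smul_eq_mul]
  ring

lemma Dop_gauss_term (c q e : ℂ) (p : Polynomial ℂ) :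
    Dop c ((p : PowerSeries ℂ) * pexp e)
      - PowerSeries.C (2 * q) * (PowerSeries.X * ((p : PowerSeries ℂ) * pexp e)) =
    ((Polynomial.derivative p
        + (Polynomial.C (e - c) - Polynomial.C (2 * q) * Polynomial.X) * p : Polynomial ℂ)
      : PowerSeries ℂ) * pexp e := by
  rw [Dop_poly_mul_pexp]
  simp only [Polynomial.coe_add, Polynomial.coe_mul, Polynomial.coe_sub, Polynomial.coe_C,
    Polynomial.coe_X]
  ring

lemma T_ne_zero {e : ℂ} (he : e ≠ 0) {p : Polynomial ℂ} (hp : p ≠ 0) :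
    Polynomial.derivative p + Polynomial.C e * p ≠ 0 := by
  intro h0
  have hc := congrArg (fun r => Polynomial.coeff r p.natDegree) h0
  simp only [Polynomial.coeff_add, Polynomial.coeff_C_mul, Polynomial.coeff_derivative,
    Polynomial.coeff_natDegree_succ_eq_zero, zero_mul, zero_add, Polynomial.coeff_zero] at hc
  rcases mul_eq_zero.mp hc with h | h
  · exact he h
  · exact hp (Polynomial.leadingCoeff_eq_zero.mp h)

lemma T_iter_ne_zero {e : ℂ} (he : e ≠ 0) (s : ℕ) {p : Polynomial ℂ} (hp : p ≠ 0) :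
    (fun r => Polynomial.derivative r + Polynomial.C e * r)^[s] p ≠ 0 := by
  induction s generalizing p with
  | zero => simpa
  | succ s ih =>
    rw [Function.iterate_succ_apply]
    exact ih (T_ne_zero he hp)

lemma pop_ne_zero {q : ℂ} (hq : q ≠ 0) (b : ℂ) {p : Polynomial ℂ} (hp : p ≠ 0) :
    Polynomial.derivative p
      + (Polynomial.C b - Polynomial.C (2 * q) * Polynomial.X) * p ≠ 0 := by
  intro h0
  rw [sub_mul] at h0
  have hd : (Polynomial.derivative p).coeff (p.natDegree + 1) = 0 := by
    rw [Polynomial.coeff_derivative]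
    simp [Polynomial.coeff_eq_zero_of_natDegree_lt (by omega : p.natDegree < p.natDegree + 2)]
  have hX : ((Polynomial.C (2 * q) * Polynomial.X) * p).coeff (p.natDegree + 1)
      = 2 * q * p.coeff p.natDegree := by
    rw [mul_assoc, Polynomial.coeff_C_mul, Polynomial.coeff_X_mul]
  have hc := congrArg (fun r => Polynomial.coeff r (p.natDegree + 1)) h0
  simp only [Polynomial.coeff_add, Polynomial.coeff_sub, hd, hX, Polynomial.coeff_C_mul,
    Polynomial.coeff_natDegree_succ_eq_zero, mul_zero, zero_add, zero_sub,
    Polynomial.coeff_zero, neg_eq_zero] at hc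
  rcases mul_eq_zero.mp hc with h | h
  · rcases mul_eq_zero.mp h with h | h
    · norm_num at h
    · exact hq h
  · exact hp (Polynomial.leadingCoeff_eq_zero.mp h)

/-- Linear independence of `pexp` over the polynomial ring. -/
lemma indep : ∀ (n : ℕ) (c : Fin n → ℂ), Function.Injective c →
    ∀ (p : Fin n → Polynomial ℂ),
      (∑ j, ((p j : PowerSeries ℂ) * pexp (c j))) = 0 → ∀ j, p j = 0 := by
  intro n
  induction n with
  | zero => exact fun c _ p _ j => j.elim0
  | succ n ih =>
    intro c hc p h
    set N := (p (Fin.last n)).natDegree + 1 with hN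
    have key : ∀ s : ℕ, (∑ j, (((fun r => Polynomial.derivative r
        + Polynomial.C (c j - c (Fin.last n)) * r)^[s] (p j) : Polynomial ℂ)
          : PowerSeries ℂ) * pexp (c j)) = 0 := by
      intro s
      induction s with
      | zero => simpa using h
      | succ s ihs =>
        have hDs := congrArg (Dop (c (Fin.last n))) ihs
        rw [Dop_zero, Dop_sum] at hDs
        rw [← hDs]
        apply Finset.sum_congr rfl
        intro j _
        rw [Dop_poly_mul_pexp, Function.iterate_succ_apply']
    have hlastpoly : (fun r => Polynomial.derivative r
        + Polynomial.C (c (Fin.last n) - c (Fin.last n)) * r)^[N] (p (Fin.last n)) = 0 := by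
      have hfn : (fun r : Polynomial ℂ => Polynomial.derivative r
          + Polynomial.C (c (Fin.last n) - c (Fin.last n)) * r)
          = fun r => Polynomial.derivative r := by
        funext r
        simp
      rw [hfn]
      exact Polynomial.iterate_derivative_eq_zero (by omega)
    have hsum := key N
    rw [Fin.sum_univ_castSucc, hlastpoly] at hsum
    simp only [Polynomial.coe_zero, zero_mul, add_zero] at hsum
    have hfirst : ∀ j : Fin n, (fun r => Polynomial.derivative r
        + Polynomial.C (c (Fin.castSucc j) - c (Fin.last n)) * r)^[N]
          (p (Fin.castSucc j)) = 0 :=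
      ih (fun j => c (Fin.castSucc j))
        (fun x y hxy => Fin.castSucc_injective n (hc hxy)) _ hsum
    have hcast : ∀ j : Fin n, p (Fin.castSucc j) = 0 := by
      intro j
      by_contra hne
      exact T_iter_ne_zero (sub_ne_zero.mpr (hc.ne (Fin.castSucc_lt_last j).ne)) N hne
        (hfirst j)
    have hlast : p (Fin.last n) = 0 := by
      have h2 := h
      rw [Fin.sum_univ_castSucc] at h2
      have hz : (∑ j : Fin n,
          ((p (Fin.castSucc j) : PowerSeries ℂ) * pexp (c (Fin.castSucc j)))) = 0 := by
        apply Finset.sum_eq_zero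
        intro j _
        rw [hcast j]
        simp
      rw [hz, zero_add] at h2
      rcases mul_eq_zero.mp h2 with h3 | h3
      · exact_mod_cast (Polynomial.coe_eq_zero_iff).mp h3
      · exact absurd h3 (pexp_ne_zero _)
    intro j
    exact Fin.lastCases hlast hcast j

/-- Main reduction: kill the Gaussian-times-exponential family. -/
lemma reduce (q : ℂ) (hq : q ≠ 0) (m : ℕ) (μ : Fin m → ℂ) (hμ : Function.Injective μ) :
    ∀ (n : ℕ) (k : Fin n → ℂ) (a : Fin n → ℂ) (P : Fin m → Polynomial ℂ),
      ((∑ j, PowerSeries.C (a j) * pexp (k j))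
        + pgauss (-q) ^ 2 * ∑ l, ((P l : PowerSeries ℂ) * pexp (μ l)) = 0) →
      ∀ l, P l = 0 := by
  intro n
  induction n with
  | zero =>
    intro k a P h l
    simp only [Finset.univ_eq_empty, Finset.sum_empty, zero_add] at h
    rcases mul_eq_zero.mp h with h1 | h1
    · exact absurd h1 (pow_ne_zero _ (pgauss_ne_zero _))
    · exact indep m μ hμ P h1 l
  | succ n ih =>
    intro k a P h
    set c := k (Fin.last n) with hcdef
    have hD := congrArg (Dop c) h
    rw [Dop_zero] at hD
    have heq : (∑ j : Fin (n + 1), PowerSeries.C ((a j) * (k j - c)) * pexp (k j))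
        + pgauss (-q) ^ 2 * ∑ l, (((Polynomial.derivative (P l)
            + (Polynomial.C (μ l - c) - Polynomial.C (2 * q) * Polynomial.X) * P l
            : Polynomial ℂ)) : PowerSeries ℂ) * pexp (μ l) = 0 := by
      rw [← hD, Dop_add, Dop_gauss_mul, Dop_sum]
      congr 1
      · exact Finset.sum_congr rfl fun j _ => (Dop_C_mul_pexp c (a j) (k j)).symm
      · congr 1
        rw [Dop_sum, Finset.mul_sum, Finset.mul_sum, ← Finset.sum_sub_distrib]
        exact Finset.sum_congr rfl fun l _ => (Dop_gauss_term c q (μ l) (P l)).symm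
    rw [Fin.sum_univ_castSucc] at heq
    rw [show (a (Fin.last n) * (k (Fin.last n) - c)) = 0 by rw [← hcdef]; ring] at heq
    simp only [map_zero, zero_mul, add_zero] at heq
    have hP' := ih (fun j => k (Fin.castSucc j))
      (fun j => a (Fin.castSucc j) * (k (Fin.castSucc j) - c))
      (fun l => Polynomial.derivative (P l)
        + (Polynomial.C (μ l - c) - Polynomial.C (2 * q) * Polynomial.X) * P l) heq
    intro l
    by_contra hne
    exact pop_ne_zero hq (μ l - c) hne (hP' l)

end GaussExpAux

open GaussExpAux in
/-- Independence of Gaussian-times-exponential formal power series: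
if `exp(q t²/2) ∑ⱼ aⱼ exp(kⱼ t) + exp(-q t²/2) ∑ₗ dₗ exp(μₗ t) = 0` in `ℂ[[t]]`
with `q ≠ 0`, the `kⱼ` pairwise distinct reals and the `μₗ` pairwise distinct
complex numbers, then all the coefficients vanish. -/
theorem gauss_exp_linearIndependent (q : ℝ) (hq : q ≠ 0) (n m : ℕ)
    (k : Fin n → ℝ) (hk : Function.Injective k)
    (μ : Fin m → ℂ) (hμ : Function.Injective μ)
    (a : Fin n → ℂ) (d : Fin m → ℂ)
    (h : pgauss (q : ℂ) * ∑ j, PowerSeries.C (a j) * pexp ((k j : ℂ)) +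
         pgauss (-(q : ℂ)) * ∑ l, PowerSeries.C (d l) * pexp (μ l) = 0) :
    (∀ j, a j = 0) ∧ (∀ l, d l = 0) := by
  have hqc : (q : ℂ) ≠ 0 := Complex.ofReal_ne_zero.mpr hq
  have hmul : pgauss (-(q : ℂ)) * pgauss (q : ℂ) = 1 := by
    have h1 := pgauss_mul_pgauss_neg (-(q : ℂ))
    rwa [neg_neg] at h1
  have h1 : (∑ j, PowerSeries.C (a j) * pexp ((k j : ℂ)))
      + pgauss (-(q : ℂ)) ^ 2 * ∑ l, PowerSeries.C (d l) * pexp (μ l) = 0 := by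
    have h2 := congrArg (fun F => pgauss (-(q : ℂ)) * F) h
    simp only [mul_add, mul_zero] at h2
    rwa [← mul_assoc, ← mul_assoc, hmul, one_mul, ← pow_two] at h2
  have h1' : (∑ j, PowerSeries.C (a j) * pexp ((k j : ℂ)))
      + pgauss (-(q : ℂ)) ^ 2
        * ∑ l, (((Polynomial.C (d l) : Polynomial ℂ)) : PowerSeries ℂ) * pexp (μ l) = 0 := by
    rw [show (∑ l, (((Polynomial.C (d l) : Polynomial ℂ)) : PowerSeries ℂ) * pexp (μ l))
        = ∑ l, PowerSeries.C (d l) * pexp (μ l) from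
      Finset.sum_congr rfl fun l _ => by rw [Polynomial.coe_C]]
    exact h1
  have hd : ∀ l, d l = 0 := by
    intro l
    have := reduce (q : ℂ) hqc m μ hμ n (fun j => (k j : ℂ)) a
      (fun l => Polynomial.C (d l)) h1' l
    exact Polynomial.C_eq_zero.mp this
  have hB : (∑ l, PowerSeries.C (d l) * pexp (μ l)) = 0 := by
    apply Finset.sum_eq_zero
    intro l _
    rw [hd l]
    simp
  rw [hB, mul_zero, add_zero] at h
  have hA : (∑ j, PowerSeries.C (a j) * pexp ((k j : ℂ))) = 0 := by
    rcases mul_eq_zero.mp h with h3 | h3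
    · exact absurd h3 (pgauss_ne_zero _)
    · exact h3
  have hA' : (∑ j, (((Polynomial.C (a j) : Polynomial ℂ)) : PowerSeries ℂ)
      * pexp ((k j : ℂ))) = 0 := by
    rw [show (∑ j, (((Polynomial.C (a j) : Polynomial ℂ)) : PowerSeries ℂ) * pexp ((k j : ℂ)))
        = ∑ j, PowerSeries.C (a j) * pexp ((k j : ℂ)) from
      Finset.sum_congr rfl fun j _ => by rw [Polynomial.coe_C]]
    exact hA
  have ha : ∀ j, a j = 0 := by
    intro j
    have hkinj : Function.Injective (fun j => ((k j : ℂ))) := fun x y hxy =>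
      hk (Complex.ofReal_injective hxy)
    have := indep n (fun j => ((k j : ℂ))) hkinj (fun j => Polynomial.C (a j)) hA' j
    exact Polynomial.C_eq_zero.mp this
  exact ⟨ha, hd⟩
end
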